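/- arXiv:2509.19299 — 2 statements merged into one kernel-verified Lean document; each statement's English description precedes it below -/
import Mathlib

section
/- For every von Neumann algebra M on a finite-dimensional complex Hilbert space H, the double commutant of M equals M, i.e. M'' = M. -/
open scoped ComplexConjugate
open scoped Matrix

noncomputable section BicommAux

variable {n : ℕ}

private lemma sum_swap3 (f : Fin n → Fin n → Fin n → ℂ) :
    ∑ i : Fin n, ∑ j : Fin n, ∑ k : Fin n, f i j k
      = ∑ k : Fin n, ∑ j : Fin n, ∑ i : Fin n, f i j k := by
  calc ∑ i : Fin n, ∑ j : Fin n, ∑ k : Fin n, f i j k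
      = ∑ i : Fin n, ∑ k : Fin n, ∑ j : Fin n, f i j k :=
        Finset.sum_congr rfl fun i _ => Finset.sum_comm
    _ = ∑ k : Fin n, ∑ i : Fin n, ∑ j : Fin n, f i j k := Finset.sum_comm
    _ = ∑ k : Fin n, ∑ j : Fin n, ∑ i : Fin n, f i j k :=
        Finset.sum_congr rfl fun k _ => Finset.sum_comm

/-- The linear equivalence between matrices and Euclidean space, giving the
Frobenius inner product. -/
private def toE (n : ℕ) : Matrix (Fin n) (Fin n) ℂ ≃ₗ[ℂ] EuclideanSpace ℂ (Fin n × Fin n) where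
  toFun X := WithLp.toLp 2 (fun p => X p.1 p.2)
  invFun f := Matrix.of fun i j => f (i, j)
  map_add' _ _ := rfl
  map_smul' _ _ := rfl
  left_inv _ := rfl
  right_inv _ := rfl

@[simp] private lemma toE_apply (X : Matrix (Fin n) (Fin n) ℂ) (p : Fin n × Fin n) :
    toE n X p = X p.1 p.2 := rfl

@[simp] private lemma toE_symm_apply (f : EuclideanSpace ℂ (Fin n × Fin n)) (i j : Fin n) :
    (toE n).symm f i j = f (i, j) := rfl

variable (M : StarSubalgebra ℂ (Matrix (Fin n) (Fin n) ℂ))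

/-- `M` as a subspace of Euclidean space. -/
private def SM : Submodule ℂ (EuclideanSpace ℂ (Fin n × Fin n)) :=
  (Subalgebra.toSubmodule M.toSubalgebra).map (toE n).toLinearMap

private lemma mem_SM {v : EuclideanSpace ℂ (Fin n × Fin n)} :
    v ∈ SM M ↔ ∃ Y ∈ M, toE n Y = v := by
  rw [SM, Submodule.mem_map]
  simp only [Subalgebra.mem_toSubmodule, StarSubalgebra.mem_toSubalgebra, LinearEquiv.coe_coe]

/-- The orthogonal projection onto `M`, as a linear endomorphism of matrices. -/
private def Pm : Matrix (Fin n) (Fin n) ℂ →ₗ[ℂ] Matrix (Fin n) (Fin n) ℂ :=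
  (toE n).symm.toLinearMap ∘ₗ (SM M).subtype ∘ₗ
    (Submodule.orthogonalProjectionOnto (SM M)).toLinearMap ∘ₗ (toE n).toLinearMap

private lemma Pm_def (X : Matrix (Fin n) (Fin n) ℂ) :
    Pm M X = (toE n).symm ((Submodule.orthogonalProjectionOnto (SM M)) (toE n X) :
      EuclideanSpace ℂ (Fin n × Fin n)) := rfl

private lemma Pm_mem (X : Matrix (Fin n) (Fin n) ℂ) : Pm M X ∈ M := by
  have h : ((Submodule.orthogonalProjectionOnto (SM M)) (toE n X) : EuclideanSpace ℂ (Fin n × Fin n)) ∈ SM M :=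
    ((Submodule.orthogonalProjectionOnto (SM M)) (toE n X)).2
  rw [mem_SM] at h
  obtain ⟨Y, hY, hYe⟩ := h
  have : Pm M X = Y := by
    rw [Pm_def, ← hYe]
    exact (toE n).symm_apply_apply Y
  rwa [this]

private lemma Pm_fix {X : Matrix (Fin n) (Fin n) ℂ} (hX : X ∈ M) : Pm M X = X := by
  have h : ((Submodule.orthogonalProjectionOnto (SM M)) (toE n X) : EuclideanSpace ℂ (Fin n × Fin n))
      = toE n X := Submodule.starProjection_eq_self_iff.2 ((mem_SM M).2 ⟨X, hX, rfl⟩)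
  rw [Pm_def, h]
  exact (toE n).symm_apply_apply X

/-- Orthogonality: `X - Pm X` is orthogonal to every element of `M`. -/
private lemma Pm_orth (X : Matrix (Fin n) (Fin n) ℂ) {Y : Matrix (Fin n) (Fin n) ℂ}
    (hY : Y ∈ M) :
    ∑ k : Fin n, ∑ j : Fin n, conj ((X - Pm M X) k j) * Y k j = 0 := by
  have hv : ((Submodule.orthogonalProjectionOnto (SM M)) (toE n X) : EuclideanSpace ℂ (Fin n × Fin n))
      = toE n (Pm M X) := by rw [Pm_def]; exact ((toE n).apply_symm_apply _).symm
  have h := Submodule.sub_starProjection_mem_orthogonal (K := SM M) (toE n X)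
  rw [← Submodule.coe_orthogonalProjectionOnto_apply, hv, ← map_sub] at h
  have h2 := (Submodule.mem_orthogonal' _ _).1 h (toE n Y) ((mem_SM M).2 ⟨Y, hY, rfl⟩)
  rw [PiLp.inner_apply, Fintype.sum_prod_type] at h2
  rw [← h2]
  refine Finset.sum_congr rfl fun k _ => Finset.sum_congr rfl fun j _ => ?_
  simp only [RCLike.inner_apply, toE_apply]
  exact mul_comm _ _

/-- Uniqueness of the orthogonal projection. -/
private lemma Pm_unique {X Z : Matrix (Fin n) (Fin n) ℂ} (hZ : Z ∈ M)
    (h : ∀ Y ∈ M, ∑ k : Fin n, ∑ j : Fin n, conj ((X - Z) k j) * Y k j = 0) :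
    Pm M X = Z := by
  have key : ((Submodule.orthogonalProjectionOnto (SM M)) (toE n X) : EuclideanSpace ℂ (Fin n × Fin n))
      = toE n Z := by
    apply Submodule.eq_starProjection_of_mem_of_inner_eq_zero ((mem_SM M).2 ⟨Z, hZ, rfl⟩)
    rintro w hw
    obtain ⟨Y, hY, rfl⟩ := (mem_SM M).1 hw
    rw [← map_sub, PiLp.inner_apply, Fintype.sum_prod_type]
    rw [← h Y hY]
    refine Finset.sum_congr rfl fun k _ => Finset.sum_congr rfl fun j _ => ?_
    simp only [RCLike.inner_apply, toE_apply]
    exact mul_comm _ _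
  rw [Pm_def, key]
  exact (toE n).symm_apply_apply Z

/-- `Pm` is equivariant for left multiplication by elements of `M`. -/
private lemma Pm_equivariant {A : Matrix (Fin n) (Fin n) ℂ} (hA : A ∈ M)
    (X : Matrix (Fin n) (Fin n) ℂ) : Pm M (A * X) = A * Pm M X := by
  apply Pm_unique M (mul_mem hA (Pm_mem M X))
  intro Y hY
  have key := Pm_orth M X (mul_mem (star_mem hA) hY)
  have hstar : star A = Aᴴ := Matrix.star_eq_conjTranspose A
  rw [hstar] at key
  set D := X - Pm M X with hD
  have hAD : A * X - A * Pm M X = A * D := by rw [hD, Matrix.mul_sub]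
  rw [hAD]
  calc ∑ i : Fin n, ∑ j : Fin n, conj ((A * D) i j) * Y i j
      = ∑ i : Fin n, ∑ j : Fin n, ∑ k : Fin n, conj (A i k) * conj (D k j) * Y i j := by
        refine Finset.sum_congr rfl fun i _ => Finset.sum_congr rfl fun j _ => ?_
        rw [Matrix.mul_apply, map_sum, Finset.sum_mul]
        exact Finset.sum_congr rfl fun k _ => by rw [_root_.map_mul]
    _ = ∑ k : Fin n, ∑ j : Fin n, ∑ i : Fin n, conj (A i k) * conj (D k j) * Y i j :=
        sum_swap3 _
    _ = ∑ k : Fin n, ∑ j : Fin n, conj (D k j) * ((Aᴴ * Y) k j) := by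
        refine Finset.sum_congr rfl fun k _ => Finset.sum_congr rfl fun j _ => ?_
        rw [Matrix.mul_apply, Finset.mul_sum]
        refine Finset.sum_congr rfl fun i _ => ?_
        rw [Matrix.conjTranspose_apply, RCLike.star_def]
        ring
    _ = 0 := key

/-- The "column" matrices of the projection `Pm`. -/
private def Qm (j k : Fin n) : Matrix (Fin n) (Fin n) ℂ :=
  Matrix.of fun r s => Pm M (Matrix.single s k 1) r j

/-- Expansion of `Pm` in terms of the column matrices. -/
private lemma Pm_expand (X : Matrix (Fin n) (Fin n) ℂ) (r j : Fin n) :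
    Pm M X r j = ∑ k : Fin n, ∑ s : Fin n, Qm M j k r s * X s k := by
  conv_lhs => rw [Matrix.matrix_eq_sum_single X]
  rw [map_sum, Matrix.sum_apply]
  have step : ∀ a : Fin n, ((Pm M) (∑ b : Fin n, Matrix.single a b (X a b))) r j
      = ∑ b : Fin n, ((Pm M) (Matrix.single a b (X a b))) r j := by
    intro a; rw [map_sum, Matrix.sum_apply]
  simp only [step]
  rw [Finset.sum_comm]
  refine Finset.sum_congr rfl fun b _ => Finset.sum_congr rfl fun a _ => ?_
  have h1 : Matrix.single a b (X a b) = X a b • Matrix.single a b 1 := by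
    rw [Matrix.smul_single, smul_eq_mul, mul_one]
  rw [h1, _root_.map_smul, Matrix.smul_apply, smul_eq_mul]
  rw [mul_comm (X a b)]
  rfl

/-- Each column matrix lies in the commutant `M'`. -/
private lemma Qm_mem_commutant (j k : Fin n) {A : Matrix (Fin n) (Fin n) ℂ} (hA : A ∈ M) :
    A * Qm M j k = Qm M j k * A := by
  have hmul : ∀ s : Fin n, A * Matrix.single s k 1
      = ∑ t : Fin n, A t s • Matrix.single t k (1 : ℂ) := by
    intro s
    ext r' j'
    simp only [Matrix.mul_apply, Matrix.single, Matrix.of_apply, Matrix.sum_apply,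
      Matrix.smul_apply, smul_eq_mul]
    by_cases hj : k = j'
    · simp [hj, Finset.sum_ite_eq, Finset.sum_ite_eq']
    · simp [hj]
  ext r s
  have lhs_eq : (A * Qm M j k) r s = ∑ t : Fin n, A r t * Pm M (Matrix.single s k 1) t j := by
    rw [Matrix.mul_apply]; rfl
  have rhs_eq : (Qm M j k * A) r s = Pm M (A * Matrix.single s k 1) r j := by
    rw [Matrix.mul_apply, hmul s, map_sum, Matrix.sum_apply]
    refine Finset.sum_congr rfl fun t _ => ?_
    rw [_root_.map_smul, Matrix.smul_apply, smul_eq_mul, mul_comm (A t s)]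
    rfl
  rw [lhs_eq, rhs_eq, Pm_equivariant M hA, Matrix.mul_apply]

/-- `Pm` commutes with left multiplication by elements of the double commutant. -/
private lemma Pm_commutes_bicomm {B : Matrix (Fin n) (Fin n) ℂ}
    (hB : ∀ C ∈ {C : Matrix (Fin n) (Fin n) ℂ | ∀ A ∈ M, A * C = C * A}, C * B = B * C)
    (X : Matrix (Fin n) (Fin n) ℂ) : Pm M (B * X) = B * Pm M X := by
  have hQB : ∀ j k : Fin n, Qm M j k * B = B * Qm M j k := fun j k =>
    hB (Qm M j k) (fun A hA => Qm_mem_commutant M j k hA)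
  ext r j
  rw [Pm_expand]
  calc ∑ k : Fin n, ∑ s : Fin n, Qm M j k r s * (B * X) s k
      = ∑ k : Fin n, ∑ t : Fin n, (Qm M j k * B) r t * X t k := by
        refine Finset.sum_congr rfl fun k _ => ?_
        calc ∑ s : Fin n, Qm M j k r s * (B * X) s k
            = ∑ s : Fin n, ∑ t : Fin n, Qm M j k r s * B s t * X t k := by
              refine Finset.sum_congr rfl fun s _ => ?_
              rw [Matrix.mul_apply, Finset.mul_sum]
              exact Finset.sum_congr rfl fun t _ => by ring
          _ = ∑ t : Fin n, ∑ s : Fin n, Qm M j k r s * B s t * X t k := Finset.sum_comm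
          _ = ∑ t : Fin n, (Qm M j k * B) r t * X t k := by
              refine Finset.sum_congr rfl fun t _ => ?_
              rw [Matrix.mul_apply, Finset.sum_mul]
    _ = ∑ k : Fin n, ∑ t : Fin n, (B * Qm M j k) r t * X t k := by
        refine Finset.sum_congr rfl fun k _ => Finset.sum_congr rfl fun t _ => ?_
        rw [hQB j k]
    _ = ∑ s : Fin n, B r s * (∑ k : Fin n, ∑ t : Fin n, Qm M j k s t * X t k) := by
        calc ∑ k : Fin n, ∑ t : Fin n, (B * Qm M j k) r t * X t k
            = ∑ k : Fin n, ∑ t : Fin n, ∑ s : Fin n, B r s * Qm M j k s t * X t k := by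
              refine Finset.sum_congr rfl fun k _ => Finset.sum_congr rfl fun t _ => ?_
              rw [Matrix.mul_apply, Finset.sum_mul]
          _ = ∑ s : Fin n, ∑ t : Fin n, ∑ k : Fin n, B r s * Qm M j k s t * X t k :=
              sum_swap3 _
          _ = ∑ s : Fin n, B r s * (∑ k : Fin n, ∑ t : Fin n, Qm M j k s t * X t k) := by
              refine Finset.sum_congr rfl fun s _ => ?_
              rw [Finset.mul_sum]
              rw [Finset.sum_comm]
              refine Finset.sum_congr rfl fun t _ => ?_
              rw [Finset.mul_sum]
              exact Finset.sum_congr rfl fun k _ => by ring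
    _ = (B * Pm M X) r j := by
        rw [Matrix.mul_apply]
        refine Finset.sum_congr rfl fun s _ => ?_
        rw [Pm_expand]

end BicommAux

/-- Bicommutant theorem: for a von Neumann algebra (unital *-subalgebra) `M` of the
operators on a finite-dimensional complex Hilbert space, `M'' = M`. -/
theorem bicommutant_eq (n : ℕ)
    (M : StarSubalgebra ℂ (Matrix (Fin n) (Fin n) ℂ)) :
    {B : Matrix (Fin n) (Fin n) ℂ |
        ∀ C ∈ {C : Matrix (Fin n) (Fin n) ℂ | ∀ A ∈ M, A * C = C * A}, C * B = B * C}
      = (M : Set (Matrix (Fin n) (Fin n) ℂ)) := by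
  ext B
  constructor
  · intro hB
    have h1 : Pm M (B * 1) = B * Pm M 1 := Pm_commutes_bicomm M hB 1
    rw [mul_one, Pm_fix M (one_mem M), mul_one] at h1
    rw [← h1]
    exact Pm_mem M B
  · intro hB C hC
    exact (hC B hB).symm
end

section
/- If M' is an algebra on PH such that P(L(H_A) ⊗ I_{Ā})P commutes elementwise with M', then M' is private for the complementary channel Ē^C of the erasure channel Ē of H_A with respect to P; explicitly, P(Ē^C)†(L(H_C))P = P(L(H_A) ⊗ I_{Ā})P ⊆ (M')' inside L(PH). -/
open Matrix Kronecker

lemma sum_kron' {ι l m n p : Type*} [Fintype ι]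
    (f : ι → Matrix l m ℂ) (B : Matrix n p ℂ) :
    (∑ i, f i) ⊗ₖ B = ∑ i, (f i ⊗ₖ B) := by
  classical
  induction (Finset.univ : Finset ι) using Finset.induction_on with
  | empty => simp [Matrix.zero_kronecker]
  | insert _ _ h ih => simp [Finset.sum_insert h, Matrix.add_kronecker, ih]

/-- If `P(L(H_A) ⊗ I)P` commutes elementwise with an algebra `S = M'` on `PH`, then
`S` is private for the complementary channel of the erasure channel `Ē` of `H_A`:
explicitly, `P(Ē^C)†(L(H_C))P = P(L(H_A) ⊗ I)P ⊆ (M')'` inside `L(PH)`. -/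
theorem private_for_complementary (a b : ℕ) (ha : 0 < a) (hb : 0 < b)
    (P : Matrix (Fin a × Fin b) (Fin a × Fin b) ℂ)
    (hP1 : P.IsHermitian) (hP2 : P * P = P)
    (S : Set (Matrix (Fin a × Fin b) (Fin a × Fin b) ℂ))
    (hS : ∀ Y ∈ S, Y = P * Y * P)
    (hcomm : ∀ Y ∈ S, ∀ X : Matrix (Fin a) (Fin a) ℂ,
      (P * (X ⊗ₖ (1 : Matrix (Fin b) (Fin b) ℂ)) * P) * Y =
        Y * (P * (X ⊗ₖ (1 : Matrix (Fin b) (Fin b) ℂ)) * P)) :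
    let Kb : Fin a × Fin a → Matrix (Fin a × Fin b) (Fin a × Fin b) ℂ :=
      fun k => (((Real.sqrt a : ℝ) : ℂ))⁻¹ •
        (Matrix.single k.1 k.2 (1 : ℂ) ⊗ₖ (1 : Matrix (Fin b) (Fin b) ℂ))
    -- dual of the complementary channel: (Ē^C)†(σ) = Σ_{k,l} σ k l • Ē_k† Ē_l
    let dualC : Matrix (Fin a × Fin a) (Fin a × Fin a) ℂ →
        Matrix (Fin a × Fin b) (Fin a × Fin b) ℂ :=
      fun σ => ∑ k : Fin a × Fin a, ∑ l : Fin a × Fin a, σ k l • ((Kb k)ᴴ * Kb l)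
    ({m | ∃ σ, m = P * dualC σ * P}
        = {m | ∃ X : Matrix (Fin a) (Fin a) ℂ,
            m = P * (X ⊗ₖ (1 : Matrix (Fin b) (Fin b) ℂ)) * P}) ∧
    (∀ m ∈ {m | ∃ σ, m = P * dualC σ * P}, ∀ Y ∈ S, m * Y = Y * m) := by
  intro Kb dualC
  set c : ℂ := (((Real.sqrt a : ℝ) : ℂ))⁻¹ with hc
  have hcc : c * c = (a : ℂ)⁻¹ := by
    rw [hc, ← mul_inv]
    congr 1
    norm_cast
    rw [Real.mul_self_sqrt (Nat.cast_nonneg a)]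
  -- conjTranspose of Kb
  have hKH : ∀ k : Fin a × Fin a, (Kb k)ᴴ =
      c • (Matrix.single k.2 k.1 (1 : ℂ) ⊗ₖ (1 : Matrix (Fin b) (Fin b) ℂ)) := by
    intro k
    show (c • (Matrix.single k.1 k.2 (1 : ℂ) ⊗ₖ (1 : Matrix (Fin b) (Fin b) ℂ)))ᴴ = _
    rw [Matrix.conjTranspose_smul]
    congr 1
    · simp [hc]
    · ext ⟨i1, i2⟩ ⟨j1, j2⟩
      simp [Matrix.conjTranspose_apply, Matrix.kroneckerMap_apply,
        Matrix.single, Matrix.one_apply, and_comm, eq_comm]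
      split_ifs <;> simp
  have hKK : ∀ k l : Fin a × Fin a, (Kb k)ᴴ * Kb l =
      (a : ℂ)⁻¹ • ((Matrix.single k.2 k.1 (1 : ℂ) * Matrix.single l.1 l.2 (1 : ℂ))
        ⊗ₖ (1 : Matrix (Fin b) (Fin b) ℂ)) := by
    intro k l
    rw [hKH]
    show _ * (c • _) = _
    rw [Matrix.smul_mul, Matrix.mul_smul, smul_smul, hcc, ← Matrix.mul_kronecker_mul, mul_one]
  -- dualC σ is of the form X ⊗ₖ 1
  have hdual : ∀ σ : Matrix (Fin a × Fin a) (Fin a × Fin a) ℂ,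
      dualC σ = ((a : ℂ)⁻¹ • ∑ k : Fin a × Fin a, ∑ l : Fin a × Fin a,
        if k.1 = l.1 then σ k l • Matrix.single k.2 l.2 (1 : ℂ) else 0)
        ⊗ₖ (1 : Matrix (Fin b) (Fin b) ℂ) := by
    intro σ
    rw [Matrix.smul_kronecker, sum_kron']
    show (∑ k : Fin a × Fin a, ∑ l : Fin a × Fin a, σ k l • ((Kb k)ᴴ * Kb l)) = _
    rw [Finset.smul_sum]
    refine Finset.sum_congr rfl fun k _ => ?_
    rw [sum_kron', Finset.smul_sum]
    refine Finset.sum_congr rfl fun l _ => ?_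
    rw [hKK]
    by_cases h : k.1 = l.1
    · rw [if_pos h, h, Matrix.single_mul_single_same, one_mul,
        Matrix.smul_kronecker, smul_comm]
    · rw [if_neg h, Matrix.single_mul_single_of_ne (h := h), Matrix.zero_kronecker,
        smul_zero, smul_zero]
  constructor
  · ext m
    constructor
    · rintro ⟨σ, rfl⟩
      exact ⟨_, by rw [hdual]⟩
    · rintro ⟨X, rfl⟩
      classical
      set i0 : Fin a := ⟨0, ha⟩ with hi0
      set σ' : Matrix (Fin a × Fin a) (Fin a × Fin a) ℂ :=
        fun k l => if k.1 = i0 ∧ l.1 = i0 then (a : ℂ) * X k.2 l.2 else 0 with hσ'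
      refine ⟨σ', ?_⟩
      rw [hdual]
      have hσsum : (∑ k : Fin a × Fin a, ∑ l : Fin a × Fin a,
          if k.1 = l.1 then σ' k l • Matrix.single k.2 l.2 (1 : ℂ) else 0)
          = (a : ℂ) • X := by
        rw [Fintype.sum_prod_type]
        rw [Finset.sum_eq_single i0]
        · have h1 : ∀ k2 : Fin a,
              (∑ l : Fin a × Fin a, if (i0, k2).1 = l.1 then
                σ' (i0, k2) l • Matrix.single (i0, k2).2 l.2 (1 : ℂ) else 0)
              = ∑ l2 : Fin a, ((a : ℂ) * X k2 l2) • Matrix.single k2 l2 (1 : ℂ) := by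
            intro k2
            rw [Fintype.sum_prod_type]
            rw [Finset.sum_eq_single i0]
            · refine Finset.sum_congr rfl fun l2 _ => ?_
              simp [hσ']
            · intro l1 _ h
              refine Finset.sum_eq_zero fun l2 _ => ?_
              rw [if_neg]
              simpa using fun h' => absurd h'.symm h
            · simp
          rw [Finset.sum_congr rfl fun k2 _ => h1 k2]
          conv_rhs => rw [Matrix.matrix_eq_sum_single ((a : ℂ) • X)]
          refine Finset.sum_congr rfl fun k2 _ => Finset.sum_congr rfl fun l2 _ => ?_
          rw [Matrix.smul_single]
          simp [Matrix.smul_apply, smul_eq_mul]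
        · intro k1 _ h
          refine Finset.sum_eq_zero fun k2 _ => Finset.sum_eq_zero fun l _ => ?_
          by_cases hk : (k1, k2).1 = l.1
          · rw [if_pos hk, hσ']
            simp only
            rw [if_neg (by simp [h]), zero_smul]
          · rw [if_neg hk]
        · simp
      rw [hσsum, smul_smul, inv_mul_cancel₀ (by exact_mod_cast ha.ne'), one_smul]
  · rintro m ⟨σ, rfl⟩ Y hY
    rw [hdual]
    exact hcomm Y hY _
end
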